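/- Let ⋆ be a semistar operation on an integral domain D and assume D is a ((⋆̄)_f, ⋆_f)-domain. If D is a ⋆-Noetherian domain, then D is ⋆-extracoherent. -/

import Mathlib

open Submodule

namespace Semistar

/-- A semistar operation on an integral domain `D` with quotient field `K`:
a map on `D`-submodules of `K` satisfying the semistar axioms on nonzero submodules. -/
structure SemistarOp (D K : Type*) [CommRing D] [Field K] [Algebra D K] where
  star : Submodule D K → Submodule D K
  star_smul_mul : ∀ x : K, x ≠ 0 → ∀ E : Submodule D K, E ≠ ⊥ →
    star (span D {x} * E) = span D {x} * star E
  star_mono : ∀ E F : Submodule D K, E ≠ ⊥ → F ≠ ⊥ → E ≤ F → star E ≤ star F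
  le_star : ∀ E : Submodule D K, E ≠ ⊥ → E ≤ star E
  star_star : ∀ E : Submodule D K, E ≠ ⊥ → star (star E) = star E

variable {D K : Type*} [CommRing D] [Field K] [Algebra D K]

/-- The finite-type semistar operation `⋆_f` associated to `⋆`. -/
def finStar (t : Submodule D K → Submodule D K) : Submodule D K → Submodule D K :=
  fun E => ⨆ F ∈ {F : Submodule D K | F ≠ ⊥ ∧ F.FG ∧ F ≤ E}, t F

/-- The image in `K` of an ideal of `D`. -/
def idealToK (I : Ideal D) : Submodule D K :=
  Submodule.map (Algebra.linearMap D K) I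

/-- `I` is a quasi-`⋆`-ideal: a nonzero ideal of `D` with `I^⋆ ∩ D = I`. -/
def IsQuasiIdeal (t : Submodule D K → Submodule D K) (I : Ideal D) : Prop :=
  I ≠ ⊥ ∧ t (idealToK I) ⊓ 1 = idealToK I

/-- `M` is a quasi-`⋆`-maximal ideal: maximal among quasi-`⋆`-ideals. -/
def IsQuasiMaximal (t : Submodule D K → Submodule D K) (M : Ideal D) : Prop :=
  IsQuasiIdeal t M ∧ ∀ J : Ideal D, IsQuasiIdeal t J → M ≤ J → M = J

/-- The localization `E·D_M` of a submodule `E` of `K` at (the complement of) an ideal `M`. -/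
def locAt (M : Ideal D) (E : Submodule D K) : Submodule D K where
  carrier := {x : K | ∃ s ∈ Submonoid.closure ((M : Set D)ᶜ), s • x ∈ E}
  add_mem' := by
    rintro x y ⟨s, hs, hsx⟩ ⟨t, ht, hty⟩
    refine ⟨s * t, mul_mem hs ht, ?_⟩
    have h1 : (s * t) • x ∈ E := by rw [mul_comm, mul_smul]; exact E.smul_mem t hsx
    have h2 : (s * t) • y ∈ E := by rw [mul_smul]; exact E.smul_mem s hty
    rw [smul_add]; exact E.add_mem h1 h2
  zero_mem' := ⟨1, Submonoid.one_mem _, by simp⟩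
  smul_mem' := by
    rintro c x ⟨s, hs, hsx⟩
    exact ⟨s, hs, by rw [smul_comm]; exact E.smul_mem c hsx⟩

/-- The spectral semistar operation `⋆̃` associated to `⋆`, defined by
`E^⋆̃ = ⋂ { E·D_M : M quasi-`⋆_f`-maximal }`. -/
def tildeStar (s : SemistarOp D K) : Submodule D K → Submodule D K :=
  fun E => ⨅ M ∈ {M : Ideal D | IsQuasiMaximal (finStar s.star) M}, locAt M E

/-- The localizing system `F^⋆` of ideals `I` with `I^⋆ = D^⋆`. -/
def starLS (s : SemistarOp D K) : Set (Ideal D) :=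
  {I : Ideal D | I ≠ ⊥ ∧ s.star (idealToK I) = s.star 1}

/-- The stable semistar operation `⋆̄` associated to `⋆`:
`E^⋆̄ = ⋃ {(E : J) : J ∈ F^⋆}`. -/
def barStar (s : SemistarOp D K) : Submodule D K → Submodule D K :=
  fun E => ⨆ J ∈ starLS s, E / idealToK J

/-- `I` is `⋆`-invertible: `(I·I⁻¹)^⋆ = D^⋆`. -/
def IsStarInvertible (t : Submodule D K → Submodule D K) (I : Submodule D K) : Prop :=
  t (I * (1 / I)) = t 1

/-- `D` is a `⋆`-domain: every nonzero finitely generated `D`-submodule of `K`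
is `⋆`-invertible. -/
def IsStarDomain (t : Submodule D K → Submodule D K) : Prop :=
  ∀ I : Submodule D K, I ≠ ⊥ → I.FG → IsStarInvertible t I

/-- `D` is a Prüfer `⋆`-multiplication domain: every nonzero finitely generated
ideal of `D` is `⋆_f`-invertible. -/
def IsPMD (t : Submodule D K → Submodule D K) : Prop :=
  ∀ I : Submodule D K, I ≠ ⊥ → I.FG → I ≤ 1 → IsStarInvertible (finStar t) I

/-- `D` is a P⋆MD for the semistar operation `s`. -/
abbrev IsPStarMD (s : SemistarOp D K) : Prop := IsPMD s.star

/-- Equality of two semistar operations (as maps on nonzero submodules):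
`D` is a `(∗₁, ∗₂)`-domain. -/
def StarEq (t₁ t₂ : Submodule D K → Submodule D K) : Prop :=
  ∀ E : Submodule D K, E ≠ ⊥ → t₁ E = t₂ E

/-- `⋆` is a.b. -/
def IsAB (t : Submodule D K → Submodule D K) : Prop :=
  ∀ E : Submodule D K, E ≠ ⊥ → E.FG → ∀ F G : Submodule D K, F ≠ ⊥ → G ≠ ⊥ →
    t (E * F) ≤ t (E * G) → t F ≤ t G

/-- `⋆` is e.a.b. -/
def IsEAB (t : Submodule D K → Submodule D K) : Prop :=
  ∀ E F G : Submodule D K, E ≠ ⊥ → E.FG → F ≠ ⊥ → F.FG → G ≠ ⊥ → G.FG →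
    t (E * F) ≤ t (E * G) → t F ≤ t G

/-- `D` is quasi-`⋆`-integrally closed: `D^⋆ = ⋃ {(F^⋆ : F^⋆) : F ∈ f(D)}`. -/
def IsQuasiStarIntegrallyClosed (t : Submodule D K → Submodule D K) : Prop :=
  (t 1 : Set K) = ⋃ F ∈ {F : Submodule D K | F ≠ ⊥ ∧ F.FG}, ((t F / t F : Submodule D K) : Set K)

/-- The submodule `S` of `K` is integrally closed in `K`. -/
def IsIntegrallyClosedIn (S : Submodule D K) : Prop :=
  ∀ x : K, (∃ p : Polynomial K, p.Monic ∧ (∀ i, p.coeff i ∈ S) ∧ Polynomial.eval x p = 0) → x ∈ S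

/-- `D` is `⋆`-Noetherian: ACC on quasi-`⋆`-ideals. -/
def IsStarNoetherian (t : Submodule D K → Submodule D K) : Prop :=
  ∀ c : ℕ → Ideal D, (∀ n, IsQuasiIdeal t (c n)) → Monotone c →
    ∃ n, ∀ m, n ≤ m → c m = c n

/-- `D` is `⋆`-extracoherent. -/
def IsExtraCoherent (t : Submodule D K → Submodule D K) : Prop :=
  ∀ E F : Submodule D K, E ≠ ⊥ → E.FG → F ≠ ⊥ → F.FG → E ⊓ F ≠ ⊥ →
    ∃ J : Submodule D K, J ≠ ⊥ ∧ J.FG ∧ J ≤ E ⊓ F ∧ t J = t E ⊓ t F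

/-- `D` is truly `⋆`-coherent. -/
def IsTrulyCoherent (t : Submodule D K → Submodule D K) : Prop :=
  ∀ E F : Submodule D K, E ≠ ⊥ → E.FG → F ≠ ⊥ → F.FG → E ⊓ F ≠ ⊥ →
    ∃ J : Submodule D K, J ≠ ⊥ ∧ J.FG ∧ t J = t (E ⊓ F)

/-- `D` is `⋆`-coherent. -/
def IsCoherent (t : Submodule D K → Submodule D K) : Prop :=
  ∀ E F : Submodule D K, E ≠ ⊥ → E.FG → F ≠ ⊥ → F.FG → E ⊓ F ≠ ⊥ →
    ∃ J : Submodule D K, J ≠ ⊥ ∧ J.FG ∧ t J = t E ⊓ t F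

/-- `D` is `⋆`-quasi-coherent. -/
def IsQuasiCoherent (t : Submodule D K → Submodule D K) : Prop :=
  ∀ F : Submodule D K, F ≠ ⊥ → F.FG →
    ∃ G : Submodule D K, G ≠ ⊥ ∧ G.FG ∧ t ((1 : Submodule D K) / F) = t G

/-- `D` is an `H(⋆)`-domain. -/
def IsHDomain (t : Submodule D K → Submodule D K) : Prop :=
  ∀ I : Ideal D, I ≠ ⊥ → t (idealToK I) = t 1 →
    ∃ J : Ideal D, J ≠ ⊥ ∧ J.FG ∧ J ≤ I ∧ t (idealToK J) = t 1

/-- `D` is an `I(⋆)`-domain. -/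
def IsIDomain (s : SemistarOp D K) : Prop :=
  ∀ I : Submodule D K, I ≠ ⊥ → I.FG → I ≤ 1 →
    (IsStarInvertible s.star I ↔ IsStarInvertible (finStar s.star) I)


section Aux

variable {D K : Type*} [CommRing D] [Field K] [Algebra D K]

lemma one_ne_bot' : (1 : Submodule D K) ≠ ⊥ := by
  intro h
  have h1 : (1 : K) ∈ (1 : Submodule D K) := Submodule.one_le.mp le_rfl
  rw [h] at h1
  simpa using h1

lemma mul_ne_bot' {A B : Submodule D K} (hA : A ≠ ⊥) (hB : B ≠ ⊥) : A * B ≠ ⊥ := by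
  obtain ⟨a, haA, ha⟩ := Submodule.exists_mem_ne_zero_of_ne_bot hA
  obtain ⟨b, hbB, hb⟩ := Submodule.exists_mem_ne_zero_of_ne_bot hB
  intro h
  have : a * b ∈ A * B := Submodule.mul_mem_mul haA hbB
  rw [h, Submodule.mem_bot] at this
  exact (mul_ne_zero ha hb) this

lemma span_singleton_ne_bot {x : K} (hx : x ≠ 0) : (span D {x}) ≠ ⊥ := by
  intro h
  have : x ∈ span D {x} := Submodule.mem_span_singleton_self x
  rw [h, Submodule.mem_bot] at this
  exact hx this

variable (s : SemistarOp D K)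

lemma star_ne_bot {E : Submodule D K} (hE : E ≠ ⊥) : s.star E ≠ ⊥ := fun h =>
  hE (le_bot_iff.mp (h ▸ s.le_star E hE))

lemma one_mem_star_one : (1 : K) ∈ s.star 1 :=
  s.le_star 1 one_ne_bot' (Submodule.one_le.mp le_rfl)

/-- `star (A * star B) = star (A * B)` for nonzero `A`, `B`. -/
lemma star_mul_star {A B : Submodule D K} (hA : A ≠ ⊥) (hB : B ≠ ⊥) :
    s.star (A * s.star B) = s.star (A * B) := by
  apply le_antisymm
  · have hsub : A * s.star B ≤ s.star (A * B) := by
      rw [Submodule.mul_le]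
      intro a haA b hbB
      rcases eq_or_ne a 0 with rfl | ha
      · rw [zero_mul]; exact zero_mem _
      · have h1 : a * b ∈ span D {a} * s.star B :=
          Submodule.mul_mem_mul (Submodule.mem_span_singleton_self a) hbB
        have h2 : span D {a} * s.star B = s.star (span D {a} * B) :=
          (s.star_smul_mul a ha B hB).symm
        rw [h2] at h1
        exact s.star_mono _ _ (mul_ne_bot' (span_singleton_ne_bot ha) hB)
          (mul_ne_bot' hA hB)
          (mul_le_mul' (span_le.mpr (Set.singleton_subset_iff.mpr haA)) le_rfl) h1
    calc s.star (A * s.star B) ≤ s.star (s.star (A * B)) :=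
          s.star_mono _ _ (mul_ne_bot' hA (star_ne_bot s hB))
            (star_ne_bot s (mul_ne_bot' hA hB)) hsub
      _ = s.star (A * B) := s.star_star _ (mul_ne_bot' hA hB)
  · exact s.star_mono _ _ (mul_ne_bot' hA hB) (mul_ne_bot' hA (star_ne_bot s hB))
      (mul_le_mul' le_rfl (s.le_star B hB))

lemma idealToK_le_one (I : Ideal D) : (idealToK I : Submodule D K) ≤ 1 := by
  rintro x ⟨y, _, rfl⟩
  exact Submodule.mem_one.mpr ⟨y, rfl⟩

lemma idealToK_mono {I J : Ideal D} (h : I ≤ J) :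
    (idealToK I : Submodule D K) ≤ idealToK J := Submodule.map_mono h

lemma idealToK_comap {E : Submodule D K} (hE : E ≤ 1) :
    idealToK (Submodule.comap (Algebra.linearMap D K) E) = E := by
  rw [idealToK, Submodule.map_comap_eq]
  have : LinearMap.range (Algebra.linearMap D K) = (1 : Submodule D K) :=
    (Submodule.one_eq_range).symm
  rw [this, inf_eq_right.mpr hE]

lemma idealToK_top : (idealToK (⊤ : Ideal D) : Submodule D K) = 1 := by
  rw [idealToK, Submodule.map_top, Submodule.one_eq_range]

lemma ne_bot_of_idealToK {I : Ideal D} (h : (idealToK I : Submodule D K) ≠ ⊥) : I ≠ ⊥ := by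
  rintro rfl
  rw [idealToK, Submodule.map_bot] at h
  exact h rfl

lemma idealToK_ne_bot [IsDomain D] [IsFractionRing D K] {I : Ideal D} (h : I ≠ ⊥) :
    (idealToK I : Submodule D K) ≠ ⊥ := by
  obtain ⟨a, haI, ha⟩ := Submodule.exists_mem_ne_zero_of_ne_bot h
  intro hb
  have : algebraMap D K a ∈ (idealToK I : Submodule D K) := ⟨a, haI, rfl⟩
  rw [hb, Submodule.mem_bot] at this
  exact ha ((IsFractionRing.injective D K) (by simpa using this))

lemma top_mem_starLS [Nontrivial D] : (⊤ : Ideal D) ∈ starLS s := by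
  refine ⟨top_ne_bot, ?_⟩
  rw [show (idealToK (⊤ : Ideal D) : Submodule D K) = 1 from idealToK_top]

/-- `starLS` is closed under "products" (implemented via comap of the product in `K`). -/
lemma starLS_mul [IsDomain D] [IsFractionRing D K] {J₁ J₂ : Ideal D}
    (h₁ : J₁ ∈ starLS s) (h₂ : J₂ ∈ starLS s) :
    ∃ J : Ideal D, J ∈ starLS s ∧
      (idealToK J : Submodule D K) = idealToK J₁ * idealToK J₂ := by
  have hne₁ : (idealToK J₁ : Submodule D K) ≠ ⊥ := idealToK_ne_bot h₁.1
  have hne₂ : (idealToK J₂ : Submodule D K) ≠ ⊥ := idealToK_ne_bot h₂.1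
  have hprod_le : (idealToK J₁ * idealToK J₂ : Submodule D K) ≤ 1 := by
    calc (idealToK J₁ * idealToK J₂ : Submodule D K) ≤ 1 * 1 :=
          mul_le_mul' (idealToK_le_one J₁) (idealToK_le_one J₂)
      _ = 1 := one_mul 1
  have hprod_ne : (idealToK J₁ * idealToK J₂ : Submodule D K) ≠ ⊥ := mul_ne_bot' hne₁ hne₂
  refine ⟨Submodule.comap (Algebra.linearMap D K) (idealToK J₁ * idealToK J₂), ?_, ?_⟩
  · constructor
    · apply ne_bot_of_idealToK (K := K)
      rw [idealToK_comap hprod_le]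
      exact hprod_ne
    · rw [idealToK_comap hprod_le]
      calc s.star (idealToK J₁ * idealToK J₂ : Submodule D K)
          = s.star (idealToK J₁ * s.star (idealToK J₂)) := (star_mul_star s hne₁ hne₂).symm
        _ = s.star (idealToK J₁ * s.star 1) := by rw [h₂.2]
        _ = s.star ((idealToK J₁ : Submodule D K) * 1) := star_mul_star s hne₁ one_ne_bot'
        _ = s.star (idealToK J₁) := by rw [mul_one]
        _ = s.star 1 := h₁.2
  · exact idealToK_comap hprod_le

lemma le_barStar [Nontrivial D] (E : Submodule D K) : E ≤ barStar s E := by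
  have h1 : E ≤ E / (idealToK (⊤ : Ideal D) : Submodule D K) := by
    rw [idealToK_top]
    intro x hx
    rw [Submodule.mem_div_iff_forall_mul_mem]
    intro y hy
    rw [Submodule.mem_one] at hy
    obtain ⟨d, rfl⟩ := hy
    rw [mul_comm, ← Algebra.smul_def]
    exact E.smul_mem d hx
  calc E ≤ E / (idealToK (⊤ : Ideal D) : Submodule D K) := h1
    _ ≤ barStar s E := le_iSup₂ (f := fun J (_ : J ∈ starLS s) => E / idealToK J) ⊤
        (top_mem_starLS s)

lemma barStar_mono {E F : Submodule D K} (h : E ≤ F) : barStar s E ≤ barStar s F := by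
  refine iSup₂_le fun J hJ => ?_
  refine le_trans ?_ (le_iSup₂ (f := fun J (_ : J ∈ starLS s) => F / idealToK J) J hJ)
  intro x hx
  rw [Submodule.mem_div_iff_forall_mul_mem] at hx ⊢
  exact fun y hy => h (hx y hy)

lemma barStar_le_star [IsDomain D] [IsFractionRing D K] {E : Submodule D K} (hE : E ≠ ⊥) :
    barStar s E ≤ s.star E := by
  refine iSup₂_le fun J hJ => ?_
  intro x hx
  rw [Submodule.mem_div_iff_forall_mul_mem] at hx
  rcases eq_or_ne x 0 with rfl | hx0
  · exact zero_mem _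
  have hle : span D {x} * idealToK J ≤ E := by
    rw [Submodule.mul_le]
    rintro m hm y hy
    rw [Submodule.mem_span_singleton] at hm
    obtain ⟨d, rfl⟩ := hm
    rw [smul_mul_assoc]
    exact E.smul_mem d (hx y hy)
  have hJne : (idealToK J : Submodule D K) ≠ ⊥ := idealToK_ne_bot hJ.1
  have h2 : s.star (span D {x} * idealToK J) ≤ s.star E :=
    s.star_mono _ _ (mul_ne_bot' (span_singleton_ne_bot hx0) hJne) hE hle
  rw [s.star_smul_mul x hx0 _ hJne, hJ.2] at h2
  have hx1 : x ∈ span D {x} * s.star 1 := by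
    have := Submodule.mul_mem_mul (Submodule.mem_span_singleton_self x) (one_mem_star_one s)
    rwa [mul_one] at this
  exact h2 hx1

end Aux


section Aux2

variable {D K : Type*} [CommRing D] [Field K] [Algebra D K]

lemma finStar_eq {t : Submodule D K → Submodule D K}
    (hmono : ∀ A B : Submodule D K, A ≠ ⊥ → B ≠ ⊥ → A ≤ B → t A ≤ t B)
    {E : Submodule D K} (hE : E ≠ ⊥) (hfg : E.FG) : finStar t E = t E := by
  apply le_antisymm
  · exact iSup₂_le fun F hF => hmono F E hF.1 hE hF.2.2
  · exact le_iSup₂ (f := fun F (_ : F ∈ {F : Submodule D K | F ≠ ⊥ ∧ F.FG ∧ F ≤ E}) => t F)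
      E ⟨hE, hfg, le_rfl⟩

variable (s : SemistarOp D K)

lemma star_eq_barStar [IsDomain D] [IsFractionRing D K]
    (hdom : StarEq (finStar (barStar s)) (finStar s.star))
    {E : Submodule D K} (hE : E ≠ ⊥) (hfg : E.FG) : s.star E = barStar s E := by
  have h1 : finStar s.star E = s.star E :=
    finStar_eq (fun A B hA hB h => s.star_mono A B hA hB h) hE hfg
  have h2 : finStar (barStar s) E = barStar s E :=
    finStar_eq (fun A B _ _ h => barStar_mono s h) hE hfg
  rw [← h1, ← hdom E hE, h2]

lemma mem_barStar [IsDomain D] [IsFractionRing D K] {E : Submodule D K} {x : K} :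
    x ∈ barStar s E ↔ ∃ J ∈ starLS s, x ∈ E / (idealToK J : Submodule D K) := by
  have hdir : Directed (· ≤ ·)
      (fun J : starLS s => E / (idealToK J.1 : Submodule D K)) := by
    rintro ⟨J₁, h₁⟩ ⟨J₂, h₂⟩
    obtain ⟨J, hJ, hEq⟩ := starLS_mul s h₁ h₂
    have hle₁ : (idealToK J : Submodule D K) ≤ idealToK J₁ := by
      rw [hEq]
      calc (idealToK J₁ * idealToK J₂ : Submodule D K) ≤ idealToK J₁ * 1 :=
            mul_le_mul' le_rfl (idealToK_le_one J₂)
        _ = idealToK J₁ := mul_one _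
    have hle₂ : (idealToK J : Submodule D K) ≤ idealToK J₂ := by
      rw [hEq]
      calc (idealToK J₁ * idealToK J₂ : Submodule D K) ≤ 1 * idealToK J₂ :=
            mul_le_mul' (idealToK_le_one J₁) le_rfl
        _ = idealToK J₂ := one_mul _
    refine ⟨⟨J, hJ⟩, ?_, ?_⟩ <;>
    · intro y hy
      rw [Submodule.mem_div_iff_forall_mul_mem] at hy ⊢
      intro z hz
      first
        | exact hy z (hle₁ hz)
        | exact hy z (hle₂ hz)
  have hne : Nonempty (starLS s) := ⟨⟨⊤, top_mem_starLS s⟩⟩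
  constructor
  · intro hx
    rw [barStar, iSup_subtype'] at hx
    obtain ⟨⟨J, hJ⟩, h⟩ := (Submodule.mem_iSup_of_directed _ hdir).mp hx
    exact ⟨J, hJ, h⟩
  · rintro ⟨J, hJ, h⟩
    exact le_iSup₂ (f := fun J (_ : J ∈ starLS s) => E / (idealToK J : Submodule D K)) J hJ h

lemma barStar_inf [IsDomain D] [IsFractionRing D K] (E F : Submodule D K) :
    barStar s E ⊓ barStar s F ≤ barStar s (E ⊓ F) := by
  intro x hx
  obtain ⟨hxE, hxF⟩ := Submodule.mem_inf.mp hx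
  rw [mem_barStar] at hxE hxF ⊢
  obtain ⟨J₁, h₁, hx₁⟩ := hxE
  obtain ⟨J₂, h₂, hx₂⟩ := hxF
  obtain ⟨J, hJ, hEq⟩ := starLS_mul s h₁ h₂
  have hle₁ : (idealToK J : Submodule D K) ≤ idealToK J₁ := by
    rw [hEq]
    calc (idealToK J₁ * idealToK J₂ : Submodule D K) ≤ idealToK J₁ * 1 :=
          mul_le_mul' le_rfl (idealToK_le_one J₂)
      _ = idealToK J₁ := mul_one _
  have hle₂ : (idealToK J : Submodule D K) ≤ idealToK J₂ := by
    rw [hEq]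
    calc (idealToK J₁ * idealToK J₂ : Submodule D K) ≤ 1 * idealToK J₂ :=
          mul_le_mul' (idealToK_le_one J₁) le_rfl
      _ = idealToK J₂ := one_mul _
  refine ⟨J, hJ, ?_⟩
  rw [Submodule.mem_div_iff_forall_mul_mem] at hx₁ hx₂ ⊢
  intro y hy
  exact ⟨hx₁ y (hle₁ hy), hx₂ y (hle₂ hy)⟩

lemma star_inf_one {B : Submodule D K} (hB : B ≠ ⊥) (hB1 : B ≤ 1) :
    s.star (s.star B ⊓ 1) ⊓ 1 = s.star B ⊓ 1 := by
  have hne : s.star B ⊓ 1 ≠ ⊥ := fun h =>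
    hB (le_bot_iff.mp (h ▸ le_inf (s.le_star B hB) hB1))
  apply le_antisymm
  · refine le_inf ?_ inf_le_right
    calc s.star (s.star B ⊓ 1) ⊓ 1 ≤ s.star (s.star B ⊓ 1) := inf_le_left
      _ ≤ s.star (s.star B) := s.star_mono _ _ hne (star_ne_bot s hB) inf_le_left
      _ = s.star B := s.star_star _ hB
  · exact le_inf (s.le_star _ hne) inf_le_right

lemma exists_fg_ideal [IsDomain D] [IsFractionRing D K]
    (hnoeth : IsStarNoetherian (s.star)) {I : Ideal D} (hI : I ≠ ⊥) :
    ∃ J : Ideal D, J ≤ I ∧ J ≠ ⊥ ∧ J.FG ∧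
      s.star (idealToK J) = s.star (idealToK I) := by
  by_contra hcon
  push_neg at hcon
  have key : ∀ J : Ideal D, J ≤ I → J ≠ ⊥ → J.FG →
      ∃ x : D, x ∈ I ∧ algebraMap D K x ∉ s.star (idealToK J) := by
    intro J hJI hJ hfg
    by_contra h
    push_neg at h
    apply hcon J hJI hJ hfg
    apply le_antisymm
    · exact s.star_mono _ _ (idealToK_ne_bot hJ) (idealToK_ne_bot hI) (idealToK_mono hJI)
    · have h1 : (idealToK I : Submodule D K) ≤ s.star (idealToK J) := by
        rintro _ ⟨y, hy, rfl⟩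
        exact h y hy
      calc s.star (idealToK I) ≤ s.star (s.star (idealToK J)) :=
            s.star_mono _ _ (idealToK_ne_bot hI) (star_ne_bot s (idealToK_ne_bot hJ)) h1
        _ = s.star (idealToK J) := s.star_star _ (idealToK_ne_bot hJ)
  have step : ∀ J : {J : Ideal D // J ≤ I ∧ J ≠ ⊥ ∧ J.FG},
      ∃ J' : {J : Ideal D // J ≤ I ∧ J ≠ ⊥ ∧ J.FG}, J.1 ≤ J'.1 ∧
        ∃ x : D, algebraMap D K x ∈ (idealToK J'.1 : Submodule D K) ∧
          algebraMap D K x ∉ s.star (idealToK J.1) := by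
    rintro ⟨J, hJI, hJ, hfg⟩
    obtain ⟨x, hxI, hxs⟩ := key J hJI hJ hfg
    refine ⟨⟨J ⊔ Ideal.span {x}, ?_, ?_, ?_⟩, le_sup_left, x, ?_, hxs⟩
    · exact sup_le hJI ((Ideal.span_singleton_le_iff_mem _).mpr hxI)
    · intro h
      exact hJ (le_bot_iff.mp (h ▸ le_sup_left))
    · exact Submodule.FG.sup hfg (Submodule.fg_span_singleton x)
    · exact ⟨x, Submodule.mem_sup_right (Ideal.mem_span_singleton_self x), rfl⟩
  choose f hle xf hx1 hx2 using step
  obtain ⟨a, haI, ha⟩ := Submodule.exists_mem_ne_zero_of_ne_bot hI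
  have hJ0 : Ideal.span {a} ≤ I ∧ Ideal.span {a} ≠ ⊥ ∧ (Ideal.span {a}).FG :=
    ⟨(Ideal.span_singleton_le_iff_mem _).mpr haI,
      fun h => ha (Ideal.span_singleton_eq_bot.mp h),
      Submodule.fg_span_singleton a⟩
  let c : ℕ → {J : Ideal D // J ≤ I ∧ J ≠ ⊥ ∧ J.FG} := fun n => f^[n] ⟨Ideal.span {a}, hJ0⟩
  have hc : ∀ n, c (n + 1) = f (c n) := fun n =>
    Function.iterate_succ_apply' f n ⟨Ideal.span {a}, hJ0⟩
  have hcne : ∀ n, (idealToK (c n).1 : Submodule D K) ≠ ⊥ := fun n =>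
    idealToK_ne_bot (c n).2.2.1
  let A : ℕ → Submodule D K := fun n => s.star (idealToK (c n).1) ⊓ 1
  let Q : ℕ → Ideal D := fun n => Submodule.comap (Algebra.linearMap D K) (A n)
  have hAeq : ∀ n, (idealToK (Q n) : Submodule D K) = A n := fun n =>
    idealToK_comap inf_le_right
  have hIleA : ∀ n, (idealToK (c n).1 : Submodule D K) ≤ A n := fun n =>
    le_inf (s.le_star _ (hcne n)) (idealToK_le_one _)
  have hAne : ∀ n, A n ≠ ⊥ := fun n h => (hcne n) (le_bot_iff.mp (h ▸ hIleA n))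
  have hQquasi : ∀ n, IsQuasiIdeal s.star (Q n) := by
    intro n
    constructor
    · apply ne_bot_of_idealToK (K := K)
      rw [hAeq n]
      exact hAne n
    · rw [hAeq n]
      exact star_inf_one s (hcne n) (idealToK_le_one _)
  have hQmono : Monotone Q := by
    apply monotone_nat_of_le_succ
    intro n
    apply Submodule.comap_mono
    apply inf_le_inf_right
    apply s.star_mono _ _ (hcne n) (hcne (n + 1))
    apply idealToK_mono
    rw [hc n]
    exact hle (c n)
  obtain ⟨n, hn⟩ := hnoeth Q hQquasi hQmono
  have hQeq : Q (n + 1) = Q n := hn (n + 1) (Nat.le_succ n)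
  have hmem : algebraMap D K (xf (c n)) ∈ A (n + 1) := by
    apply hIleA (n + 1)
    rw [hc n]
    exact hx1 (c n)
  rw [← hAeq (n + 1), congrArg idealToK hQeq, hAeq n] at hmem
  exact hx2 (c n) (Submodule.mem_inf.mp hmem).1

lemma exists_fg_le [IsDomain D] [IsFractionRing D K]
    (hnoeth : IsStarNoetherian (s.star)) {G E : Submodule D K}
    (hG : G ≠ ⊥) (hGE : G ≤ E) (hfg : E.FG) :
    ∃ J : Submodule D K, J ≠ ⊥ ∧ J.FG ∧ J ≤ G ∧ s.star J = s.star G := by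
  obtain ⟨a, haS, haInt⟩ := FractionalIdeal.isFractional_of_fg (S := nonZeroDivisors D) hfg
  have ha : a ≠ 0 := mem_nonZeroDivisors_iff_ne_zero.mp haS
  set xa : K := algebraMap D K a with hxa
  have hxa0 : xa ≠ 0 := fun h => ha (IsFractionRing.injective D K (by simpa [hxa] using h))
  have hG'le : span D {xa} * G ≤ 1 := by
    rw [Submodule.mul_le]
    intro m hm g hg
    rw [Submodule.mem_span_singleton] at hm
    obtain ⟨d, rfl⟩ := hm
    obtain ⟨ci, hci⟩ := haInt g (hGE hg)
    rw [Submodule.mem_one]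
    refine ⟨d * ci, ?_⟩
    calc algebraMap D K (d * ci) = algebraMap D K d * algebraMap D K ci := map_mul _ _ _
      _ = algebraMap D K d * (a • g) := by rw [hci]
      _ = d • xa * g := by rw [Algebra.smul_def, Algebra.smul_def, hxa]; ring
  have hG'ne : span D {xa} * G ≠ ⊥ := mul_ne_bot' (span_singleton_ne_bot hxa0) hG
  have hI0eq : (idealToK (Submodule.comap (Algebra.linearMap D K) (span D {xa} * G)) :
      Submodule D K) = span D {xa} * G := idealToK_comap hG'le
  have hI0ne : Submodule.comap (Algebra.linearMap D K) (span D {xa} * G) ≠ ⊥ := by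
    apply ne_bot_of_idealToK (K := K)
    rw [hI0eq]
    exact hG'ne
  obtain ⟨J₀, hJ₀le, hJ₀ne, hJ₀fg, hJ₀star⟩ := exists_fg_ideal s hnoeth hI0ne
  rw [hI0eq] at hJ₀star
  have hJ₀Kne : (idealToK J₀ : Submodule D K) ≠ ⊥ := idealToK_ne_bot hJ₀ne
  have hJ₀Kle : (idealToK J₀ : Submodule D K) ≤ span D {xa} * G := by
    calc (idealToK J₀ : Submodule D K) ≤ idealToK (Submodule.comap (Algebra.linearMap D K)
          (span D {xa} * G)) := idealToK_mono hJ₀le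
      _ = span D {xa} * G := hI0eq
  have hinv : ∀ H : Submodule D K, span D {xa⁻¹} * (span D {xa} * H) = H := by
    intro H
    rw [← mul_assoc, Submodule.span_mul_span, Set.singleton_mul_singleton,
      inv_mul_cancel₀ hxa0, ← Submodule.one_eq_span, one_mul]
  refine ⟨span D {xa⁻¹} * idealToK J₀, ?_, ?_, ?_, ?_⟩
  · exact mul_ne_bot' (span_singleton_ne_bot (inv_ne_zero hxa0)) hJ₀Kne
  · exact Submodule.FG.mul (Submodule.fg_span_singleton _) (Submodule.FG.map _ hJ₀fg)
  · calc span D {xa⁻¹} * idealToK J₀ ≤ span D {xa⁻¹} * (span D {xa} * G) :=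
          mul_le_mul' le_rfl hJ₀Kle
      _ = G := hinv G
  · calc s.star (span D {xa⁻¹} * idealToK J₀)
        = span D {xa⁻¹} * s.star (idealToK J₀) :=
          s.star_smul_mul _ (inv_ne_zero hxa0) _ hJ₀Kne
      _ = span D {xa⁻¹} * s.star (span D {xa} * G) := by rw [hJ₀star]
      _ = s.star (span D {xa⁻¹} * (span D {xa} * G)) :=
          (s.star_smul_mul _ (inv_ne_zero hxa0) _ hG'ne).symm
      _ = s.star G := by rw [hinv G]

end Aux2


theorem statement10 {D K : Type*} [CommRing D] [IsDomain D] [Field K] [Algebra D K]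
    [IsFractionRing D K] (s : SemistarOp D K)
    (hdom : StarEq (finStar (barStar s)) (finStar s.star))
    (hnoeth : IsStarNoetherian s.star) :
    IsExtraCoherent s.star := by
  intro E F hE hEfg hF hFfg hEF
  obtain ⟨J, hJne, hJfg, hJle, hJstar⟩ := exists_fg_le s hnoeth hEF inf_le_left hEfg
  refine ⟨J, hJne, hJfg, hJle, ?_⟩
  rw [hJstar]
  apply le_antisymm
  · exact le_inf (s.star_mono _ _ hEF hE inf_le_left) (s.star_mono _ _ hEF hF inf_le_right)
  · calc s.star E ⊓ s.star F = barStar s E ⊓ barStar s F := by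
          rw [star_eq_barStar s hdom hE hEfg, star_eq_barStar s hdom hF hFfg]
      _ ≤ barStar s (E ⊓ F) := barStar_inf s E F
      _ ≤ s.star (E ⊓ F) := barStar_le_star s hEF

end Semistar
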